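/- The Lobachevsky function satisfies the duplication formula: for every real θ, Λ(2θ) = 2Λ(θ) + 2Λ(θ + π/2). -/

import Mathlib

open MeasureTheory Real

/-- The Lobachevsky function `Λ(θ) = -∫₀^θ log |2 sin t| dt`. -/
noncomputable def lobachevsky (θ : ℝ) : ℝ :=
  -∫ t in (0:ℝ)..θ, Real.log |2 * Real.sin t|

namespace LobachevskyAux

open Set intervalIntegral

lemma integrableOn_log_Ioc01 : IntegrableOn Real.log (Set.Ioc (0:ℝ) 1) := by
  have h : IntegrableOn (fun x : ℝ => -Real.log x) (Set.Ioc (0:ℝ) 1) := by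
    apply integrableOn_deriv_of_nonneg (g := fun x : ℝ => x - x * Real.log x)
    · exact (continuous_id.sub Real.continuous_mul_log).continuousOn
    · intro x hx
      have h1 : HasDerivAt (fun y : ℝ => y * Real.log y) (Real.log x + 1) x := by
        have h2 : HasDerivAt (fun y : ℝ => y * Real.log y) (1 * Real.log x + id x * x⁻¹) x :=
          (hasDerivAt_id x).mul (Real.hasDerivAt_log (ne_of_gt hx.1))
        convert h2 using 1
        rw [one_mul, id_eq, mul_inv_cancel₀ (ne_of_gt hx.1)]
      have h3 : HasDerivAt (fun y : ℝ => y - y * Real.log y) (1 - (Real.log x + 1)) x :=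
        (hasDerivAt_id x).sub h1
      convert h3 using 1
      ring
    · intro x hx
      simpa using Real.log_nonpos hx.1.le hx.2.le
  exact h.neg.congr (Filter.Eventually.of_forall fun x => by simp)

lemma logabs_zero (c : ℝ) (hc : 0 ≤ c) :
    IntervalIntegrable (fun t : ℝ => Real.log |t|) volume 0 c := by
  rw [intervalIntegrable_iff_integrableOn_Ioc_of_le hc]
  have h1 : IntegrableOn Real.log (Set.Ioc (0:ℝ) c) := by
    rcases le_total c 1 with h | h
    · exact integrableOn_log_Ioc01.mono_set (Set.Ioc_subset_Ioc_right h)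
    · have h3 : IntervalIntegrable Real.log volume 1 c := by
        apply intervalIntegrable_log
        intro h0
        rw [Set.mem_uIcc] at h0
        rcases h0 with ⟨h4, _⟩ | ⟨h5, _⟩ <;> linarith
      have h2 : IntegrableOn Real.log (Set.Ioc (1:ℝ) c) :=
        (intervalIntegrable_iff_integrableOn_Ioc_of_le h).mp h3
      have := integrableOn_log_Ioc01.union h2
      rwa [Set.Ioc_union_Ioc_eq_Ioc zero_le_one h] at this
  exact h1.congr_fun (fun t ht => by rw [abs_of_pos ht.1]) measurableSet_Ioc

lemma logabs_all (a b : ℝ) : IntervalIntegrable (fun t : ℝ => Real.log |t|) volume a b := by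
  have key : ∀ c : ℝ, IntervalIntegrable (fun t : ℝ => Real.log |t|) volume 0 c := by
    intro c
    rcases le_total 0 c with hc | hc
    · exact logabs_zero c hc
    · rw [IntervalIntegrable.iff_comp_neg]
      simpa using logabs_zero (-c) (by linarith)
  exact (key a).symm.trans (key b)

lemma sin_lb {t : ℝ} (h0 : 0 < t) (h1 : t < π) :
    2 / π ^ 2 * (t * (π - t)) ≤ Real.sin t := by
  have hπ := Real.pi_pos
  rcases le_total t (π / 2) with h | h
  · have h2 := Real.mul_le_sin h0.le h
    have h3 : 2 / π ^ 2 * (t * (π - t)) ≤ 2 / π * t := by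
      rw [div_mul_eq_mul_div, div_mul_eq_mul_div, div_le_div_iff₀ (by positivity) hπ]
      nlinarith [mul_pos (mul_pos h0 h0) hπ]
    linarith
  · have h2 := Real.mul_le_sin (x := π - t) (by linarith) (by linarith)
    rw [Real.sin_pi_sub] at h2
    have h3 : 2 / π ^ 2 * (t * (π - t)) ≤ 2 / π * (π - t) := by
      rw [div_mul_eq_mul_div, div_mul_eq_mul_div, div_le_div_iff₀ (by positivity) hπ]
      nlinarith [mul_pos hπ (mul_pos (sub_pos.mpr h1) (sub_pos.mpr h1))]
    linarith

lemma f_measurable : Measurable (fun t : ℝ => Real.log |2 * Real.sin t|) :=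
  Real.measurable_log.comp ((measurable_const.mul Real.measurable_sin).abs)

lemma f_base : IntegrableOn (fun t : ℝ => Real.log |2 * Real.sin t|) (Set.Ioc 0 π) := by
  have hπ := Real.pi_pos
  set B : ℝ → ℝ := fun t =>
    Real.log 2 + |Real.log (π ^ 2 / 2)| + (|Real.log (|t|)| + |Real.log (|π - t|)|) with hBdef
  have hBint : IntegrableOn B (Set.Ioc 0 π) := by
    have h1 : IntervalIntegrable B volume 0 π := by
      apply IntervalIntegrable.add
      · exact intervalIntegrable_const
      · apply IntervalIntegrable.add
        · exact (logabs_all 0 π).abs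
        · have := ((logabs_all 0 π).comp_sub_left π).abs
          simpa using this.symm
    exact (intervalIntegrable_iff_integrableOn_Ioc_of_le hπ.le).mp h1
  apply Integrable.mono' hBint f_measurable.aestronglyMeasurable
  rw [ae_restrict_iff' measurableSet_Ioc]
  refine Filter.Eventually.of_forall ?_
  intro t ht
  have hB0 : 0 ≤ Real.log 2 := Real.log_nonneg one_le_two
  rcases eq_or_lt_of_le ht.2 with rfl | htl
  · simp only [Real.sin_pi, mul_zero, abs_zero, Real.log_zero, norm_zero, hBdef]
    positivity
  · have h0 := ht.1
    have hsinpos : 0 < Real.sin t := Real.sin_pos_of_pos_of_lt_pi h0 htl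
    have habs : |2 * Real.sin t| = 2 * Real.sin t := abs_of_pos (by linarith)
    have hub : |2 * Real.sin t| ≤ 2 := by
      rw [habs]; nlinarith [Real.sin_le_one t]
    have hlb : 2 / π ^ 2 * (t * (π - t)) ≤ |2 * Real.sin t| := by
      rw [habs]
      have := sin_lb h0 htl
      linarith
    have hp : (0:ℝ) < 2 / π ^ 2 * (t * (π - t)) := by
      have : 0 < π - t := by linarith
      positivity
    rw [Real.norm_eq_abs]
    rcases le_total 0 (Real.log |2 * Real.sin t|) with hl | hl
    · rw [abs_of_nonneg hl]
      have : Real.log |2 * Real.sin t| ≤ Real.log 2 :=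
        Real.log_le_log (by positivity) hub
      have h5 : (0:ℝ) ≤ |Real.log (π ^ 2 / 2)| := abs_nonneg _
      have h6 : (0:ℝ) ≤ |Real.log (|t|)| := abs_nonneg _
      have h7 : (0:ℝ) ≤ |Real.log (|π - t|)| := abs_nonneg _
      simp only [hBdef]
      linarith
    · rw [abs_of_nonpos hl]
      have hmono : Real.log (2 / π ^ 2 * (t * (π - t))) ≤ Real.log |2 * Real.sin t| :=
        Real.log_le_log hp hlb
      have hexp : Real.log (2 / π ^ 2 * (t * (π - t)))
          = Real.log (2 / π ^ 2) + Real.log t + Real.log (π - t) := by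
        rw [Real.log_mul (by positivity) (by nlinarith), Real.log_mul (ne_of_gt h0) (by linarith)]
        ring
      have hinv : Real.log (2 / π ^ 2) = -Real.log (π ^ 2 / 2) := by
        rw [show (2 / π ^ 2 : ℝ) = (π ^ 2 / 2)⁻¹ by field_simp, Real.log_inv]
      have h6 : Real.log t = Real.log |t| := by rw [abs_of_pos h0]
      have h7 : Real.log (π - t) = Real.log |π - t| := by rw [abs_of_pos (by linarith)]
      have h8 := le_abs_self (Real.log (π ^ 2 / 2))
      have h9 := neg_abs_le (Real.log |t|)
      have h10 := neg_abs_le (Real.log |π - t|)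
      simp only [hBdef]
      rw [hexp, hinv, h6, h7] at hmono
      linarith

lemma f_periodic (x : ℝ) (k : ℤ) :
    Real.log |2 * Real.sin (x + k * π)| = Real.log |2 * Real.sin x| := by
  rw [Real.sin_add_int_mul_pi]
  have h1 : |((-1:ℝ)) ^ k| = 1 := by
    rcases Int.even_or_odd k with he | ho
    · rw [he.neg_one_zpow, abs_one]
    · rw [ho.neg_one_zpow]; norm_num
  rw [abs_mul, abs_mul, h1, abs_mul (2:ℝ)]
  ring_nf

lemma f_int (a b : ℝ) :
    IntervalIntegrable (fun t : ℝ => Real.log |2 * Real.sin t|) volume a b := by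
  have hπ := Real.pi_pos
  set f : ℝ → ℝ := fun t => Real.log |2 * Real.sin t| with hf
  have base : ∀ k : ℤ, IntervalIntegrable f volume (k * π) (k * π + π) := by
    intro k
    have h0 : IntervalIntegrable f volume 0 π :=
      (intervalIntegrable_iff_integrableOn_Ioc_of_le hπ.le).mpr f_base
    have h1 := h0.comp_add_right (-(k * π))
    have he : (fun x => f (x + -(k * π))) = f := by
      funext x
      have := f_periodic (x + -(k * π)) k
      simpa [hf] using this.symm
    rw [he] at h1
    have e1 : (0:ℝ) - -(k * π) = k * π := by ring
    have e2 : (π:ℝ) - -(k * π) = k * π + π := by ring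
    rwa [e1, e2] at h1
  have step : ∀ (n : ℕ) (k : ℤ), IntervalIntegrable f volume (k * π) (k * π + n * π) := by
    intro n
    induction n with
    | zero =>
      intro k
      simp only [Nat.cast_zero, zero_mul, add_zero]
      exact IntervalIntegrable.refl
    | succ n ih =>
      intro k
      have hb := base (k + n)
      have e : ((k + n : ℤ) : ℝ) * π = k * π + n * π := by push_cast; ring
      rw [e] at hb
      have h2 := (ih k).trans hb
      have e2 : (k:ℝ) * π + (n:ℝ) * π + π = (k:ℝ) * π + ((n + 1 : ℕ) : ℝ) * π := by
        push_cast; ring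
      rwa [e2] at h2
  obtain ⟨k, hk⟩ : ∃ k : ℤ, (k : ℝ) * π ≤ min a b :=
    ⟨⌊min a b / π⌋, by rw [← le_div_iff₀ hπ]; exact Int.floor_le _⟩
  obtain ⟨n, hn⟩ : ∃ n : ℕ, max a b ≤ k * π + n * π := by
    obtain ⟨n, hn⟩ := exists_nat_ge ((max a b - k * π) / π)
    refine ⟨n, ?_⟩
    rw [div_le_iff₀ hπ] at hn
    linarith
  apply (step n k).mono_set
  rw [Set.uIcc_subset_uIcc_iff_le]
  exact ⟨le_trans inf_le_left hk, le_trans hn le_sup_right⟩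

lemma ae_good : ∀ᵐ x : ℝ, Real.sin x ≠ 0 ∧ Real.cos x ≠ 0 := by
  have hπ := Real.pi_pos
  have hZ : {x : ℝ | ¬ (Real.sin x ≠ 0 ∧ Real.cos x ≠ 0)}
      ⊆ Set.range (fun k : ℤ => (k : ℝ) * (π / 2)) := by
    intro x hx
    simp only [Set.mem_setOf_eq, not_and_or, not_not] at hx
    rcases hx with h | h
    · obtain ⟨k, hk⟩ := Real.sin_eq_zero_iff.mp h
      exact ⟨2 * k, by push_cast; linarith⟩
    · obtain ⟨k, hk⟩ := Real.cos_eq_zero_iff.mp h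
      exact ⟨2 * k + 1, by push_cast; linarith⟩
  rw [ae_iff]
  exact measure_mono_null hZ ((Set.countable_range _).measure_zero _)

lemma key_identity (θ : ℝ) :
    (∫ t in (0:ℝ)..(2 * θ), Real.log |2 * Real.sin t|) =
      2 * ((∫ t in (0:ℝ)..θ, Real.log |2 * Real.sin t|)
        + ∫ t in (π/2:ℝ)..(θ + π/2), Real.log |2 * Real.sin t|) := by
  have h1 : (∫ x in (0:ℝ)..θ, Real.log |2 * Real.sin (2 * x)|)
      = 2⁻¹ * ∫ x in (0:ℝ)..(2 * θ), Real.log |2 * Real.sin x| := by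
    have := integral_comp_mul_left (a := (0:ℝ)) (b := θ)
      (fun t : ℝ => Real.log |2 * Real.sin t|) (two_ne_zero)
    simpa [smul_eq_mul] using this
  have h2 : (∫ x in (0:ℝ)..θ, Real.log |2 * Real.sin (2 * x)|)
      = ∫ x in (0:ℝ)..θ,
          (Real.log |2 * Real.sin x| + Real.log |2 * Real.sin (x + π/2)|) := by
    apply intervalIntegral.integral_congr_ae
    filter_upwards [ae_good] with x hx _
    have hsx := hx.1
    have hcx := hx.2
    rw [Real.sin_two_mul, Real.sin_add_pi_div_two]
    rw [show |2 * (2 * Real.sin x * Real.cos x)| = |2 * Real.sin x| * |2 * Real.cos x| by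
      rw [← abs_mul]; ring_nf]
    exact Real.log_mul (abs_ne_zero.mpr (mul_ne_zero two_ne_zero hsx))
      (abs_ne_zero.mpr (mul_ne_zero two_ne_zero hcx))
  have h3 : (∫ x in (0:ℝ)..θ,
        (Real.log |2 * Real.sin x| + Real.log |2 * Real.sin (x + π/2)|))
      = (∫ x in (0:ℝ)..θ, Real.log |2 * Real.sin x|)
        + ∫ x in (0:ℝ)..θ, Real.log |2 * Real.sin (x + π/2)| := by
    apply integral_add (f_int 0 θ)
    have := (f_int (π/2) (θ + π/2)).comp_add_right (π/2)
    simpa using this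
  have h4 : (∫ x in (0:ℝ)..θ, Real.log |2 * Real.sin (x + π/2)|)
      = ∫ t in (π/2:ℝ)..(θ + π/2), Real.log |2 * Real.sin t| := by
    have := integral_comp_add_right (a := (0:ℝ)) (b := θ)
      (fun t : ℝ => Real.log |2 * Real.sin t|) (π/2)
    simpa using this
  rw [h2, h3, h4] at h1
  linarith

lemma I_pi_half : (∫ t in (0:ℝ)..(π/2), Real.log |2 * Real.sin t|) = 0 := by
  have hid := key_identity (π/2)
  rw [show (2 * (π/2) : ℝ) = π by ring, show (π/2 + π/2 : ℝ) = π by ring] at hid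
  have hrefl : (∫ t in (π/2:ℝ)..π, Real.log |2 * Real.sin t|)
      = ∫ t in (0:ℝ)..(π/2), Real.log |2 * Real.sin t| := by
    have h := integral_comp_sub_left (a := (0:ℝ)) (b := π/2)
      (fun t : ℝ => Real.log |2 * Real.sin t|) π
    have he : (fun x : ℝ => Real.log |2 * Real.sin (π - x)|)
        = fun x : ℝ => Real.log |2 * Real.sin x| := by
      funext x; rw [Real.sin_pi_sub]
    rw [he] at h
    rw [show (π - π/2 : ℝ) = π/2 by ring, show (π - 0 : ℝ) = π by ring] at h
    exact h.symm
  have hsplit : (∫ t in (0:ℝ)..π, Real.log |2 * Real.sin t|)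
      = (∫ t in (0:ℝ)..(π/2), Real.log |2 * Real.sin t|)
        + ∫ t in (π/2:ℝ)..π, Real.log |2 * Real.sin t| :=
    (integral_add_adjacent_intervals (f_int 0 (π/2)) (f_int (π/2) π)).symm
  linarith

end LobachevskyAux

/-- The duplication formula Λ(2θ) = 2Λ(θ) + 2Λ(θ + π/2). -/
theorem lobachevsky_two_mul (θ : ℝ) :
    lobachevsky (2 * θ) = 2 * lobachevsky θ + 2 * lobachevsky (θ + Real.pi / 2) := by
  simp only [lobachevsky]
  have hid := LobachevskyAux.key_identity θ
  have hsplit : (∫ t in (0:ℝ)..(θ + π/2), Real.log |2 * Real.sin t|)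
      = (∫ t in (0:ℝ)..(π/2), Real.log |2 * Real.sin t|)
        + ∫ t in (π/2:ℝ)..(θ + π/2), Real.log |2 * Real.sin t| :=
    (intervalIntegral.integral_add_adjacent_intervals
      (LobachevskyAux.f_int 0 (π/2)) (LobachevskyAux.f_int (π/2) (θ + π/2))).symm
  have h0 := LobachevskyAux.I_pi_half
  linarith
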